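/- Let Ω ⊆ ℝⁿ satisfy the ε-ball condition and let φ be the local graph representing ∂Ω near x₀ ∈ ∂Ω (in the frame with origin x₀ and last axis d_{x₀}). Then the restriction of φ to the closed disk of radius r̃ = (√2/4) f⁻¹(ε), where f(α) = 2α/cos α, is (1/tan(f⁻¹(ε)))-Lipschitz continuous. -/
import Mathlib


open Metric
open scoped RealInnerProductSpace

set_option maxHeartbeats 4000000 in
/-- The local graph `φ` of `∂Ω` at `x₀` (in the frame with origin `x₀` and last axis `d₀`)
is `(1/tan(f⁻¹(ε)))`-Lipschitz on the closed disk of radius `r̃ = (√2/4) f⁻¹(ε)`, where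
`f(α) = 2α/cos α`. -/
theorem stmt_16 {n : ℕ} (hn : 2 ≤ n) (ε : ℝ) (hε : 0 < ε)
    (Ω : Set (EuclideanSpace ℝ (Fin n))) (hΩ : IsOpen Ω)
    (hball : ∀ x ∈ frontier Ω, ∃ dx : EuclideanSpace ℝ (Fin n), ‖dx‖ = 1 ∧
      ball (x - ε • dx) ε ⊆ Ω ∧ ball (x + ε • dx) ε ⊆ (closure Ω)ᶜ)
    (x₀ : EuclideanSpace ℝ (Fin n)) (hx₀ : x₀ ∈ frontier Ω)
    (d₀ : EuclideanSpace ℝ (Fin n)) (hd₀ : ‖d₀‖ = 1)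
    (h1 : ball (x₀ - ε • d₀) ε ⊆ Ω) (h2 : ball (x₀ + ε • d₀) ε ⊆ (closure Ω)ᶜ)
    (α : ℝ) (hα : α ∈ Set.Ioo 0 (Real.pi / 2)) (hfα : 2 * α / Real.cos α = ε)
    (φ : EuclideanSpace ℝ (Fin n) → ℝ) (hφ0 : φ 0 = 0)
    (hφ : ∀ v : EuclideanSpace ℝ (Fin n), ⟪v, d₀⟫ = 0 → ‖v‖ < Real.sqrt 3 / 2 * ε →
      φ v ∈ Set.Ioo (-ε) ε ∧
      ∀ t ∈ Set.Ioo (-ε) ε,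
        (x₀ + v + t • d₀ ∈ frontier Ω ↔ t = φ v) ∧ (x₀ + v + t • d₀ ∈ Ω ↔ t < φ v)) :
    ∀ v w : EuclideanSpace ℝ (Fin n), ⟪v, d₀⟫ = 0 → ⟪w, d₀⟫ = 0 →
      ‖v‖ ≤ Real.sqrt 2 / 4 * α → ‖w‖ ≤ Real.sqrt 2 / 4 * α →
      |φ v - φ w| ≤ (1 / Real.tan α) * ‖v - w‖ := by
  obtain ⟨hα0, hα2⟩ := hα
  have hπ : (0:ℝ) < Real.pi := Real.pi_pos
  have hc : 0 < Real.cos α := Real.cos_pos_of_mem_Ioo ⟨by linarith, hα2⟩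
  have hc1 : Real.cos α ≤ 1 := Real.cos_le_one α
  have hsin : 0 < Real.sin α := Real.sin_pos_of_pos_of_lt_pi hα0 (by linarith)
  have hεc : ε * Real.cos α = 2 * α := by
    rw [div_eq_iff hc.ne'] at hfα; linarith
  have hsqrt2 : (Real.sqrt 2) ^ 2 = 2 := Real.sq_sqrt (by norm_num)
  have hsqrt2le : Real.sqrt 2 ≤ 2 := by nlinarith [Real.sqrt_nonneg 2]
  have hαε : α ≤ ε / 2 := by nlinarith
  have hαeq : α = ε * Real.cos α / 2 := by linarith
  -- basic consequences of the radius bound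
  have hrad : ∀ u : EuclideanSpace ℝ (Fin n), ‖u‖ ≤ Real.sqrt 2 / 4 * α →
      ‖u‖ < Real.sqrt 3 / 2 * ε ∧ ‖u‖ ^ 2 ≤ Real.cos α ^ 2 * ε ^ 2 / 32 := by
    intro u hu
    have h3 : 1 ≤ Real.sqrt 3 := by
      nlinarith [Real.sq_sqrt (show (0:ℝ) ≤ 3 by norm_num), Real.sqrt_nonneg 3]
    have hquarter : ‖u‖ ≤ ε / 4 := by nlinarith [Real.sqrt_nonneg 2]
    constructor
    · nlinarith
    · have h1' : ‖u‖ ^ 2 ≤ (Real.sqrt 2 / 4 * α) ^ 2 := by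
        nlinarith [norm_nonneg u]
      have h2' : (Real.sqrt 2 / 4 * α) ^ 2 = α ^ 2 / 8 := by
        rw [mul_pow, div_pow, hsqrt2]; ring
      have h3' : α ^ 2 / 8 = Real.cos α ^ 2 * ε ^ 2 / 32 := by
        linear_combination (-(ε * Real.cos α + 2 * α) / 32) * hεc
      linarith
  -- norm computation for vectors orthogonal to d₀
  have normsq : ∀ (a : EuclideanSpace ℝ (Fin n)) (τ : ℝ), ⟪a, d₀⟫ = 0 →
      ‖a + τ • d₀‖ ^ 2 = ‖a‖ ^ 2 + τ ^ 2 := by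
    intro a τ ha
    rw [norm_add_sq_real, real_inner_smul_right, ha, norm_smul, Real.norm_eq_abs, hd₀]
    rw [mul_one, sq_abs]
    ring
  -- the bound |φ u| ≤ ‖u‖²/ε
  have phib : ∀ u : EuclideanSpace ℝ (Fin n), ⟪u, d₀⟫ = 0 →
      ‖u‖ ≤ Real.sqrt 2 / 4 * α → |φ u| ≤ ‖u‖ ^ 2 / ε := by
    intro u hu hur
    obtain ⟨hu3, _⟩ := hrad u hur
    obtain ⟨hIoo, hch⟩ := hφ u hu hu3
    have hN0 : 0 ≤ ‖u‖ ^ 2 / ε := div_nonneg (sq_nonneg _) hε.le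
    have hNε : ‖u‖ ^ 2 = (‖u‖ ^ 2 / ε) * ε := by field_simp
    rw [abs_le]
    constructor
    · -- lower bound: use the interior ball at x₀
      by_contra hcon
      push_neg at hcon
      set N := ‖u‖ ^ 2 / ε with hN
      set t := (φ u - N) / 2 with htdef
      have htu : φ u < t := by rw [htdef]; linarith
      have htN : t < -N := by rw [htdef]; linarith
      have htIoo : t ∈ Set.Ioo (-ε) ε := ⟨by linarith [hIoo.1], by linarith⟩
      have hmem : x₀ + u + t • d₀ ∈ ball (x₀ - ε • d₀) ε := by
        rw [mem_ball, dist_eq_norm]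
        have heq : (x₀ + u + t • d₀) - (x₀ - ε • d₀) = u + (t + ε) • d₀ := by module
        rw [heq]
        have hns := normsq u (t + ε) hu
        have ha : ε * (N + t) < 0 := by nlinarith [hIoo.1]
        have hb : t * (t + ε) < -N * (t + ε) := by nlinarith [hIoo.1]
        have hcc : 0 ≤ N * (t + ε) := mul_nonneg hN0 (by linarith [hIoo.1])
        have hsq : ‖u + (t + ε) • d₀‖ ^ 2 < ε ^ 2 := by
          rw [hns, hNε]; nlinarith
        nlinarith [norm_nonneg (u + (t + ε) • d₀)]
      have := (hch t htIoo).2.mp (h1 hmem)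
      linarith
    · -- upper bound: use the exterior ball at x₀
      by_contra hcon
      push_neg at hcon
      set N := ‖u‖ ^ 2 / ε with hN
      set t := (N + φ u) / 2 with htdef
      have htu : t < φ u := by rw [htdef]; linarith
      have htN : N < t := by rw [htdef]; linarith
      have htIoo : t ∈ Set.Ioo (-ε) ε := ⟨by linarith, by linarith [hIoo.2]⟩
      have hmem : x₀ + u + t • d₀ ∈ ball (x₀ + ε • d₀) ε := by
        rw [mem_ball, dist_eq_norm]
        have heq : (x₀ + u + t • d₀) - (x₀ + ε • d₀) = u + (t - ε) • d₀ := by module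
        rw [heq]
        have hns := normsq u (t - ε) hu
        have ha : ε * (N - t) < 0 := by nlinarith
        have hb : t * (t - ε) < 0 :=
          mul_neg_of_pos_of_neg (by linarith) (by linarith [hIoo.2])
        have hsq : ‖u + (t - ε) • d₀‖ ^ 2 < ε ^ 2 := by
          rw [hns, hNε]; nlinarith
        nlinarith [norm_nonneg (u + (t - ε) • d₀)]
      exact (h2 hmem) (subset_closure ((hch t htIoo).2.mpr htu))
  -- disjoint balls are at distance ≥ 2ε
  have distle : ∀ c₁ c₂ : EuclideanSpace ℝ (Fin n), ball c₁ ε ⊆ Ω →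
      ball c₂ ε ⊆ (closure Ω)ᶜ → 2 * ε ≤ dist c₁ c₂ := by
    intro c₁ c₂ hA hB
    by_contra h
    push_neg at h
    have hm1 : midpoint ℝ c₁ c₂ ∈ ball c₁ ε := by
      rw [mem_ball, dist_midpoint_left]
      have : ‖(2:ℝ)‖⁻¹ = 1 / 2 := by norm_num
      rw [this]; linarith
    have hm2 : midpoint ℝ c₁ c₂ ∈ ball c₂ ε := by
      rw [mem_ball, dist_midpoint_right]
      have : ‖(2:ℝ)‖⁻¹ = 1 / 2 := by norm_num
      rw [this]; linarith
    exact (hB hm2) (subset_closure (hA hm1))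
  -- the one-sided Lipschitz estimate
  have key : ∀ v w : EuclideanSpace ℝ (Fin n), ⟪v, d₀⟫ = 0 → ⟪w, d₀⟫ = 0 →
      ‖v‖ ≤ Real.sqrt 2 / 4 * α → ‖w‖ ≤ Real.sqrt 2 / 4 * α →
      φ w - φ v ≤ 1 / Real.tan α * ‖v - w‖ := by
    intro v w hv hw hvr hwr
    by_contra hcon
    push_neg at hcon
    have hK : 1 / Real.tan α = Real.cos α / Real.sin α := by
      rw [Real.tan_eq_sin_div_cos, one_div_div]
    rw [hK] at hcon
    obtain ⟨s, hs⟩ : ∃ s, s = ‖v - w‖ := ⟨_, rfl⟩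
    rw [← hs] at hcon
    have hs0 : 0 ≤ s := hs ▸ norm_nonneg _
    have hκ0 : 0 ≤ Real.cos α / Real.sin α * s :=
      mul_nonneg (div_nonneg hc.le hsin.le) hs0
    obtain ⟨t, htdef⟩ : ∃ t, t = (φ v + φ w - Real.cos α / Real.sin α * s) / 2 := ⟨_, rfl⟩
    have htv : φ v < t := by rw [htdef]; linarith
    have htw : t < φ w := by rw [htdef]; linarith
    obtain ⟨D, hDdef⟩ : ∃ D, D = φ w - t := ⟨_, rfl⟩
    have hD0 : 0 < D := by rw [hDdef]; linarith
    have hDs : Real.cos α / Real.sin α * s < D := by rw [hDdef, htdef]; linarith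
    have hscD : Real.cos α * s < Real.sin α * D := by
      rw [div_mul_eq_mul_div, div_lt_iff₀ hsin] at hDs; linarith
    -- bounds on φ v, φ w
    have hφvB : |φ v| ≤ Real.cos α ^ 2 * ε / 32 := by
      refine le_trans (phib v hv hvr) ?_
      rw [div_le_div_iff₀ hε (by norm_num : (0:ℝ) < 32)]
      nlinarith only [(hrad v hvr).2]
    have hφwB : |φ w| ≤ Real.cos α ^ 2 * ε / 32 := by
      refine le_trans (phib w hw hwr) ?_
      rw [div_le_div_iff₀ hε (by norm_num : (0:ℝ) < 32)]
      nlinarith only [(hrad w hwr).2]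
    obtain ⟨hφvB1, hφvB2⟩ := abs_le.mp hφvB
    obtain ⟨hφwB1, hφwB2⟩ := abs_le.mp hφwB
    have hDB : D < Real.cos α ^ 2 * ε / 16 := by rw [hDdef]; linarith
    -- the frontier point X above w and its ball direction
    obtain ⟨hφwIoo, hφwch⟩ := hφ w hw (hrad w hwr).1
    obtain ⟨hφvIoo, hφvch⟩ := hφ v hv (hrad v hvr).1
    have hXfr : x₀ + w + (φ w) • d₀ ∈ frontier Ω := (hφwch (φ w) hφwIoo).1.mpr rfl
    obtain ⟨dx, hdx1, hdxint, hdxext⟩ := hball _ hXfr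
    -- distance of X from x₀
    have hδ2 : ‖(x₀ + w + (φ w) • d₀) - x₀‖ ^ 2 ≤ (Real.cos α * ε / 4) ^ 2 := by
      have heq : (x₀ + w + (φ w) • d₀) - x₀ = w + (φ w) • d₀ := by module
      rw [heq, normsq w (φ w) hw]
      have hφw2 : (φ w) ^ 2 ≤ (Real.cos α ^ 2 * ε / 32) ^ 2 := sq_le_sq' hφwB1 hφwB2
      have hc2 : Real.cos α ^ 2 ≤ 1 := by nlinarith only [hc.le, hc1]
      have hc4ε : Real.cos α ^ 4 * ε ^ 2 ≤ Real.cos α ^ 2 * ε ^ 2 := by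
        nlinarith only [hc2, sq_nonneg (Real.cos α * ε)]
      nlinarith only [(hrad w hwr).2, hφw2, hc4ε]
    -- the direction dx is close to d₀
    have hdd : ‖dx - d₀‖ ≤ Real.cos α / 4 := by
      have hdist1 := distle ((x₀ + w + (φ w) • d₀) - ε • dx) (x₀ + ε • d₀) hdxint h2
      have hdist2 := distle (x₀ - ε • d₀) ((x₀ + w + (φ w) • d₀) + ε • dx) h1 hdxext
      have he1 : ((x₀ + w + (φ w) • d₀) - ε • dx) - (x₀ + ε • d₀)
          = ((x₀ + w + (φ w) • d₀) - x₀) - ε • (dx + d₀) := by module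
      have he2 : (x₀ - ε • d₀) - ((x₀ + w + (φ w) • d₀) + ε • dx)
          = -(((x₀ + w + (φ w) • d₀) - x₀) + ε • (dx + d₀)) := by module
      rw [dist_eq_norm, he1] at hdist1
      rw [dist_eq_norm, he2, norm_neg] at hdist2
      set ζ := (x₀ + w + (φ w) • d₀) - x₀ with hζ
      have hpar := parallelogram_law_with_norm ℝ ζ (ε • (dx + d₀))
      have hq1 : (2 * ε) * (2 * ε) ≤ ‖ζ - ε • (dx + d₀)‖ * ‖ζ - ε • (dx + d₀)‖ :=
        mul_self_le_mul_self (by linarith) hdist1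
      have hq2 : (2 * ε) * (2 * ε) ≤ ‖ζ + ε • (dx + d₀)‖ * ‖ζ + ε • (dx + d₀)‖ :=
        mul_self_le_mul_self (by linarith) hdist2
      have hnn : ‖ε • (dx + d₀)‖ * ‖ε • (dx + d₀)‖ = ε ^ 2 * ‖dx + d₀‖ ^ 2 := by
        rw [norm_smul, Real.norm_eq_abs, abs_of_pos hε]; ring
      have hS : 4 * ε ^ 2 - ‖ζ‖ ^ 2 ≤ ε ^ 2 * ‖dx + d₀‖ ^ 2 := by
        nlinarith only [hq1, hq2, hpar, hnn]
      have hsub : ‖dx - d₀‖ ^ 2 + ‖dx + d₀‖ ^ 2 = 4 := by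
        have h1' := norm_add_sq_real dx d₀
        have h2' := norm_sub_sq_real dx d₀
        rw [hdx1, hd₀] at h1' h2'
        nlinarith only [h1', h2']
      have hdd2 : ε ^ 2 * ‖dx - d₀‖ ^ 2 ≤ (Real.cos α * ε / 4) ^ 2 := by
        nlinarith only [hδ2, hS, hsub, sq_nonneg ε]
      have hN2 : ‖dx - d₀‖ ^ 2 ≤ (Real.cos α / 4) ^ 2 := by
        have hε2 : (0:ℝ) < ε ^ 2 := by positivity
        have hrw : (Real.cos α * ε / 4) ^ 2 = ε ^ 2 * (Real.cos α / 4) ^ 2 := by ring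
        rw [hrw] at hdd2
        exact le_of_mul_le_mul_left hdd2 hε2
      nlinarith only [hN2, norm_nonneg (dx - d₀), hc.le]
    -- the connecting vector U
    obtain ⟨U, hU⟩ : ∃ U, U = (v - w) + (t - φ w) • d₀ := ⟨_, rfl⟩
    have hvw0 : ⟪v - w, d₀⟫ = 0 := by rw [inner_sub_left, hv, hw]; ring
    have hUd0 : ⟪U, d₀⟫ = t - φ w := by
      rw [hU, inner_add_left, hvw0, real_inner_smul_left, real_inner_self_eq_norm_sq, hd₀]
      norm_num
    have hL2 : ‖U‖ ^ 2 = s ^ 2 + D ^ 2 := by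
      rw [hU, normsq (v - w) (t - φ w) hvw0, hs, hDdef]; ring
    have hsin2 : Real.sin α ^ 2 + Real.cos α ^ 2 = 1 := Real.sin_sq_add_cos_sq α
    have hcL : Real.cos α ^ 2 * ‖U‖ ^ 2 ≤ D ^ 2 := by
      rw [hL2]
      have hmul := mul_self_le_mul_self (mul_nonneg hc.le hs0) hscD.le
      have hsinD : (Real.sin α ^ 2 + Real.cos α ^ 2) * D ^ 2 = D ^ 2 := by
        rw [hsin2]; ring
      nlinarith only [hmul, hsinD]
    have hcU : Real.cos α * ‖U‖ ≤ D := by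
      nlinarith only [hcL, mul_nonneg hc.le (norm_nonneg U), hD0.le]
    have hUdx : ⟪U, dx⟫ ≤ -(3 / 4) * D := by
      have hsplit : ⟪U, dx⟫ = ⟪U, d₀⟫ + ⟪U, dx - d₀⟫ := by
        rw [inner_sub_right]; ring
      have hle : ⟪U, dx - d₀⟫ ≤ ‖U‖ * (Real.cos α / 4) :=
        le_trans (real_inner_le_norm U (dx - d₀))
          (mul_le_mul_of_nonneg_left hdd (norm_nonneg U))
      have hU4 : ‖U‖ * (Real.cos α / 4) ≤ D / 4 := by
        have hrw : ‖U‖ * (Real.cos α / 4) = Real.cos α * ‖U‖ / 4 := by ring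
        rw [hrw]; linarith only [hcU]
      rw [hsplit, hUd0]
      have : t - φ w = -D := by rw [hDdef]; ring
      rw [this]; linarith
    have hL2' : ‖U‖ ^ 2 ≤ D * ε / 16 := by
      have hD2 : D ^ 2 ≤ D * (Real.cos α ^ 2 * ε / 16) := by
        nlinarith only [hDB, hD0.le]
      have : Real.cos α ^ 2 * ‖U‖ ^ 2 ≤ Real.cos α ^ 2 * (D * ε / 16) := by
        nlinarith only [hcL, hD2]
      exact le_of_mul_le_mul_left this (by positivity)
    -- the point above v lies in the interior ball at X
    have hfin : ‖U + ε • dx‖ ^ 2 < ε ^ 2 := by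
      have h1' : ‖U + ε • dx‖ ^ 2 = ‖U‖ ^ 2 + 2 * (ε * ⟪U, dx⟫) + ε ^ 2 := by
        rw [norm_add_sq_real, real_inner_smul_right, norm_smul, Real.norm_eq_abs,
          abs_of_pos hε, hdx1]
        ring
      rw [h1']
      have h2' : 2 * (ε * ⟪U, dx⟫) ≤ 2 * (ε * (-(3 / 4) * D)) := by
        have := mul_le_mul_of_nonneg_left hUdx hε.le
        linarith only [this]
      nlinarith only [hL2', h2', mul_pos hD0 hε]
    have hymem : x₀ + v + t • d₀ ∈ Ω := by
      apply hdxint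
      rw [mem_ball, dist_eq_norm]
      have heq : (x₀ + v + t • d₀) - ((x₀ + w + (φ w) • d₀) - ε • dx) = U + ε • dx := by
        rw [hU]; module
      rw [heq]
      nlinarith only [hfin, norm_nonneg (U + ε • dx), hε]
    have htIoo : t ∈ Set.Ioo (-ε) ε := ⟨by linarith [hφvIoo.1], by linarith [hφwIoo.2]⟩
    have := (hφvch t htIoo).2.mp hymem
    linarith
  -- conclude
  intro v w hv hw hvr hwr
  rw [abs_sub_le_iff]
  constructor
  · have h' := key w v hw hv hwr hvr
    rwa [norm_sub_rev] at h'
  · exact key v w hv hw hvr hwr
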